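/- Let x > 0 and ε ∈ (0, 1/4). If J is a positive integer with J ≥ J₀ := ⌊−ln(x²ε²/2)/ln 2⌋ + 1, then 0 ≤ F_J(x) − F(x) < 2ε. -/

import Mathlib

open MeasureTheory ProbabilityTheory

/-- `F₃(x) = 1 − 2∑_{n=1}^∞ (4n²x² − 1)exp(−2n²x²)`, the cdf of the maximum of a
Brownian excursion. -/
noncomputable def F₃ (x : ℝ) : ℝ :=
  1 - 2 * ∑' n : ℕ, (4 * ((n : ℝ) + 1) ^ 2 * x ^ 2 - 1) *
      Real.exp (-(2 * ((n : ℝ) + 1) ^ 2 * x ^ 2))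

open Real Filter Topology

namespace SB

/-- summability of `n^2 * exp(-π a n^2)` over `ℤ` -/
lemma summable_sq_exp {a : ℝ} (ha : 0 < a) :
    Summable fun n : ℤ => (n : ℝ) ^ 2 * rexp (-π * a * (n : ℝ) ^ 2) := by
  have := summable_pow_mul_jacobiTheta₂_term_bound 0 ha 2
  refine this.congr fun n => ?_
  rw [Int.cast_abs, sq_abs]
  ring_nf

lemma summable_exp_sq {a : ℝ} (ha : 0 < a) :
    Summable fun n : ℤ => rexp (-π * a * (n : ℝ) ^ 2) := by
  have := summable_pow_mul_jacobiTheta₂_term_bound 0 ha 0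
  refine this.congr fun n => ?_
  rw [pow_zero, one_mul]
  ring_nf

noncomputable def th (a : ℝ) : ℝ := ∑' n : ℤ, rexp (-π * a * (n : ℝ) ^ 2)

noncomputable def ps (a : ℝ) : ℝ := ∑' n : ℤ, π * (n : ℝ) ^ 2 * rexp (-π * a * (n : ℝ) ^ 2)

lemma summable_ps {a : ℝ} (ha : 0 < a) :
    Summable fun n : ℤ => π * (n : ℝ) ^ 2 * rexp (-π * a * (n : ℝ) ^ 2) := by
  simpa [mul_assoc] using (summable_sq_exp ha).mul_left π

lemma ps_nonneg (a : ℝ) : 0 ≤ ps a :=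
  tsum_nonneg fun n => by positivity

lemma th_fe {a : ℝ} (ha : 0 < a) : th a = (1 / a ^ ((1:ℝ) / 2)) * th (1 / a) := by
  rw [th, Real.tsum_exp_neg_mul_int_sq ha, th]
  congr 1
  refine tsum_congr fun n => ?_
  rw [neg_div, div_eq_mul_one_div π a]
  simp [neg_mul]

lemma hasDerivAt_th {a : ℝ} (ha : 0 < a) : HasDerivAt th (-ps a) a := by
  have hderiv : ∀ (n : ℤ), ∀ y ∈ Set.Ioi (a/2),
      HasDerivAt (fun z => rexp (-π * z * (n : ℝ) ^ 2))
        (-(π * (n : ℝ) ^ 2 * rexp (-π * y * (n : ℝ) ^ 2))) y := by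
    intro n y _
    have h1 : HasDerivAt (fun z : ℝ => -π * z * (n:ℝ)^2) (-π * (n:ℝ)^2) y := by
      simpa using ((hasDerivAt_id y).const_mul (-π)).mul_const ((n:ℝ)^2)
    have := h1.exp
    convert this using 1
    ring
  have hbound : ∀ (n : ℤ), ∀ y ∈ Set.Ioi (a/2),
      ‖-(π * (n : ℝ) ^ 2 * rexp (-π * y * (n : ℝ) ^ 2))‖ ≤
        π * (n : ℝ) ^ 2 * rexp (-π * (a/2) * (n : ℝ) ^ 2) := by
    intro n y hy
    rw [norm_neg, norm_mul, norm_mul]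
    simp only [norm_eq_abs, abs_of_nonneg pi_pos.le, sq_abs, abs_of_nonneg (exp_nonneg _)]
    rw [abs_of_nonneg (by positivity : (0:ℝ) ≤ (n:ℝ)^2)]
    have hle : rexp (-π * y * (n:ℝ)^2) ≤ rexp (-π * (a/2) * (n:ℝ)^2) := by
      apply exp_le_exp.2
      have h2 : a/2 ≤ y := le_of_lt hy
      nlinarith [mul_nonneg (mul_nonneg pi_pos.le (sq_nonneg (n:ℝ))) (sub_nonneg.2 h2)]
    exact mul_le_mul_of_nonneg_left hle (by positivity)
  have h : HasDerivAt (fun z => ∑' n : ℤ, rexp (-π * z * (n : ℝ) ^ 2))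
      (∑' n : ℤ, -(π * (n : ℝ) ^ 2 * rexp (-π * a * (n : ℝ) ^ 2))) a :=
    hasDerivAt_tsum_of_isPreconnected (summable_ps (by linarith)) (isOpen_Ioi (a := a/2))
      isPreconnected_Ioi hderiv hbound (show a ∈ Set.Ioi (a/2) by simp; linarith)
      (summable_exp_sq ha) (show a ∈ Set.Ioi (a/2) by simp; linarith)
  have : ∑' n : ℤ, -(π * (n : ℝ) ^ 2 * rexp (-π * a * (n : ℝ) ^ 2)) = -ps a := by
    rw [tsum_neg]; rfl
  rw [this] at h
  exact h

lemma ps_fe {a : ℝ} (ha : 0 < a) :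
    ps a = (1/2) * a ^ (-(3:ℝ)/2) * th (1/a) - a ^ (-(5:ℝ)/2) * ps (1/a) := by
  have hia : 0 < 1/a := by positivity
  -- derivative of RHS function
  have h1 : HasDerivAt (fun z : ℝ => z ^ (-(1:ℝ)/2)) ((-(1:ℝ)/2) * a ^ (-(1:ℝ)/2 - 1)) a :=
    Real.hasDerivAt_rpow_const (Or.inl (ne_of_gt ha))
  have h2 : HasDerivAt (fun z : ℝ => th (1/z)) (-ps (1/a) * -(a^2)⁻¹) a := by
    have hinner : HasDerivAt (fun z : ℝ => 1/z) (-(a^2)⁻¹) a := by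
      simpa [one_div] using hasDerivAt_inv (ne_of_gt ha)
    exact (hasDerivAt_th hia).comp a hinner
  have hR : HasDerivAt (fun z : ℝ => z ^ (-(1:ℝ)/2) * th (1/z))
      ((-(1:ℝ)/2) * a ^ (-(1:ℝ)/2 - 1) * th (1/a) + a ^ (-(1:ℝ)/2) * (-ps (1/a) * -(a^2)⁻¹)) a :=
    h1.mul h2
  -- th agrees with RHS function near a
  have hev : th =ᶠ[𝓝 a] fun z : ℝ => z ^ (-(1:ℝ)/2) * th (1/z) := by
    filter_upwards [Ioi_mem_nhds ha] with z hz
    have hz' : (0:ℝ) < z := hz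
    rw [th_fe hz']
    congr 1
    rw [show (-1:ℝ)/2 = -(1/2) by norm_num, Real.rpow_neg hz'.le, one_div]
  have hth : HasDerivAt th ((-(1:ℝ)/2) * a ^ (-(1:ℝ)/2 - 1) * th (1/a) +
      a ^ (-(1:ℝ)/2) * (-ps (1/a) * -(a^2)⁻¹)) a := hR.congr_of_eventuallyEq hev
  have huniq := (hasDerivAt_th ha).unique hth
  have e1 : a ^ (-(1:ℝ)/2 - 1) = a ^ (-(3:ℝ)/2) := by norm_num
  have e2 : a ^ (-(1:ℝ)/2) * (a^2)⁻¹ = a ^ (-(5:ℝ)/2) := by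
    rw [← Real.rpow_natCast a 2, ← Real.rpow_neg ha.le, ← Real.rpow_add ha]
    norm_num
  have e3 : a ^ (-(1:ℝ)/2) * (-ps (1/a) * -(a^2)⁻¹) = a ^ (-(5:ℝ)/2) * ps (1/a) := by
    rw [← e2]; ring
  rw [e1, e3] at huniq
  linarith [huniq]

/-- The key Poisson-summation identity: the `ℤ`-indexed version of `2 S t - 1`. -/
lemma int_sum_eq {t : ℝ} (ht : 0 < t) :
    ∑' n : ℤ, (4 * (n:ℝ)^2 * t - 1) * rexp (-(2 * (n:ℝ)^2 * t)) =
      -(2 * (2*t/π) ^ (-(3:ℝ)/2) * ps (π/(2*t))) := by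
  set a : ℝ := 2*t/π with ha_def
  have ha : 0 < a := by positivity
  have hinv : 1/a = π/(2*t) := by
    rw [ha_def, one_div_div]
  have hexp : ∀ n : ℤ, -(2 * (n:ℝ)^2 * t) = -π * a * (n:ℝ)^2 := by
    intro n
    rw [ha_def]
    field_simp
  have hterm : ∀ n : ℤ, (4 * (n:ℝ)^2 * t - 1) * rexp (-(2 * (n:ℝ)^2 * t)) =
      2*a * (π * (n:ℝ)^2 * rexp (-π * a * (n:ℝ)^2)) - rexp (-π * a * (n:ℝ)^2) := by
    intro n
    rw [hexp n]
    have h4t : 4 * (n:ℝ)^2 * t = 2*a*(π*(n:ℝ)^2) := by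
      rw [ha_def]; field_simp; ring
    rw [h4t]; ring
  calc ∑' n : ℤ, (4 * (n:ℝ)^2 * t - 1) * rexp (-(2 * (n:ℝ)^2 * t))
      = ∑' n : ℤ, (2*a * (π * (n:ℝ)^2 * rexp (-π * a * (n:ℝ)^2)) - rexp (-π * a * (n:ℝ)^2)) :=
        tsum_congr hterm
    _ = 2*a * ps a - th a := by
        rw [Summable.tsum_sub (((summable_ps ha).mul_left (2*a))) (summable_exp_sq ha),
          tsum_mul_left]
        rfl
    _ = -(2 * a ^ (-(3:ℝ)/2) * ps (1/a)) := by
        rw [ps_fe ha, th_fe ha]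
        have e1 : 2*a*(a ^ (-(5:ℝ)/2)) = 2 * a ^ (-(3:ℝ)/2) := by
          have h5 : a ^ (-(3:ℝ)/2) = a * a ^ (-(5:ℝ)/2) := by
            rw [show -(3:ℝ)/2 = 1 + -5/2 by norm_num, Real.rpow_add ha, Real.rpow_one]
          rw [h5]; ring
        have e2 : 2*a*((1/2) * a ^ (-(3:ℝ)/2)) = a ^ (-(1:ℝ)/2) := by
          have h5 : a ^ (-(1:ℝ)/2) = a * a ^ (-(3:ℝ)/2) := by
            rw [show -(1:ℝ)/2 = 1 + -3/2 by norm_num, Real.rpow_add ha, Real.rpow_one]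
          rw [h5]; ring
        have e3 : (1:ℝ) / a ^ ((1:ℝ)/2) = a ^ (-(1:ℝ)/2) := by
          rw [show (-1:ℝ)/2 = -(1/2) by norm_num, Real.rpow_neg ha.le, one_div]
        linear_combination th (1/a) * e2 - th (1/a) * e3 - ps (1/a) * e1
    _ = -(2 * (2*t/π) ^ (-(3:ℝ)/2) * ps (π/(2*t))) := by rw [hinv]

lemma z_exp_le_one {z : ℝ} (hz : 0 ≤ z) : z * rexp (-z) ≤ 1 := by
  have h1 : z ≤ rexp z := by linarith [Real.add_one_le_exp z]
  calc z * rexp (-z) ≤ rexp z * rexp (-z) :=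
        mul_le_mul_of_nonneg_right h1 (exp_nonneg _)
    _ = 1 := by rw [← Real.exp_add]; simp

lemma summable_sq_exp_nat {t : ℝ} (ht : 0 < t) :
    Summable fun n : ℕ => ((n:ℝ)+1)^2 * rexp (-(2 * ((n:ℝ)+1)^2 * t)) := by
  have ha : 0 < 2*t/π := by positivity
  have hexp : ∀ m : ℤ, -π * (2*t/π) * (m:ℝ)^2 = -(2 * (m:ℝ)^2 * t) := by
    intro m; field_simp
  have := (summable_sq_exp ha).comp_injective
    (fun a b h => by simpa using h : Function.Injective (fun n : ℕ => (n+1 : ℤ)))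
  refine this.congr fun n => ?_
  simp only [Function.comp_apply]
  rw [hexp]
  push_cast
  ring_nf

lemma summable_exp_nat {t : ℝ} (ht : 0 < t) :
    Summable fun n : ℕ => rexp (-(2 * ((n:ℝ)+1)^2 * t)) := by
  have ha : 0 < 2*t/π := by positivity
  have hexp : ∀ m : ℤ, -π * (2*t/π) * (m:ℝ)^2 = -(2 * (m:ℝ)^2 * t) := by
    intro m; field_simp
  have := (summable_exp_sq ha).comp_injective
    (fun a b h => by simpa using h : Function.Injective (fun n : ℕ => (n+1 : ℤ)))
  refine this.congr fun n => ?_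
  simp only [Function.comp_apply]
  rw [hexp]
  push_cast
  ring_nf

/-- ℕ-indexed summability (shifted) -/
lemma summable_nat_shift {t : ℝ} (ht : 0 < t) :
    Summable fun n : ℕ => (4 * ((n:ℝ)+1)^2 * t - 1) * rexp (-(2 * ((n:ℝ)+1)^2 * t)) := by
  have := (((summable_sq_exp_nat ht).mul_left (4*t)).sub (summable_exp_nat ht))
  refine this.congr fun n => ?_
  ring

noncomputable def Sf (t : ℝ) : ℝ :=
  ∑' n : ℕ, (4 * ((n:ℝ)+1)^2 * t - 1) * rexp (-(2 * ((n:ℝ)+1)^2 * t))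

lemma F3_eq (y : ℝ) : F₃ y = 1 - 2 * Sf (y^2) := rfl

lemma Sf_int {t : ℝ} (ht : 0 < t) :
    (∑' n : ℤ, (4 * (n:ℝ)^2 * t - 1) * rexp (-(2 * (n:ℝ)^2 * t))) = 2 * Sf t - 1 := by
  set f : ℤ → ℝ := fun m => (4 * (m:ℝ)^2 * t - 1) * rexp (-(2 * (m:ℝ)^2 * t)) with hf
  have hshift : ∀ n : ℕ, f ((n:ℤ)+1) = (4 * ((n:ℝ)+1)^2 * t - 1) * rexp (-(2 * ((n:ℝ)+1)^2 * t)) := by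
    intro n; simp only [hf]; push_cast; ring_nf
  have hsum1 : Summable fun n : ℕ => f n := by
    rw [← summable_nat_add_iff 1]
    exact (summable_nat_shift ht).congr fun n => by rw [← hshift n]; push_cast; ring_nf
  have hneg : ∀ n : ℕ, f (-((n:ℤ)+1)) = f ((n:ℤ)+1) := by
    intro n; simp only [hf]; push_cast; ring_nf
  have hsum2 : Summable fun n : ℕ => f (-((n:ℤ)+1)) := by
    refine ((summable_nat_add_iff 1).2 hsum1).congr fun n => ?_
    rw [hneg n]; push_cast; ring_nf
  rw [tsum_of_nat_of_neg_add_one hsum1 hsum2]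
  have e1 : ∑' n : ℕ, f (-((n:ℤ)+1)) = Sf t := by
    rw [Sf]; exact tsum_congr fun n => by rw [hneg n, hshift n]
  have e2 : ∑' n : ℕ, f n = -1 + Sf t := by
    rw [Summable.tsum_eq_zero_add hsum1]
    congr 1
    · simp [hf]
    · rw [Sf]
      exact tsum_congr fun n => by rw [show ((n+1 : ℕ) : ℤ) = (n:ℤ)+1 by push_cast; ring, hshift n]
  rw [e1, e2]; ring

lemma Sf_le_half {t : ℝ} (ht : 0 < t) : Sf t ≤ 1/2 := by
  have h := int_sum_eq ht
  rw [Sf_int ht] at h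
  have h1 : (0:ℝ) ≤ 2 * (2*t/π) ^ (-(3:ℝ)/2) * ps (π/(2*t)) := by
    have := ps_nonneg (π/(2*t))
    have := Real.rpow_nonneg (by positivity : (0:ℝ) ≤ 2*t/π) (-(3:ℝ)/2)
    positivity
  linarith

lemma ps_bound {b : ℝ} (hb : 2*π ≤ b) : ps b ≤ 8 * rexp (-(π*b/2)) / b := by
  have hbpos : 0 < b := lt_of_lt_of_le (by positivity) hb
  set r : ℝ := rexp (-(π*b/2)) with hr
  have hrpos : 0 < r := exp_pos _
  have hr1 : r ≤ 1/2 := by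
    have h2 : (1:ℝ) ≤ π*b/2 := by nlinarith [pi_gt_three]
    have h3 : r ≤ rexp (-1) := by
      rw [hr]; apply exp_le_exp.2; linarith
    have he : rexp (-1) < 1/2 := by
      rw [exp_neg, inv_lt_comm₀ (exp_pos 1) (by norm_num)]
      calc (1/2 : ℝ)⁻¹ = 2 := by norm_num
        _ < rexp 1 := by linarith [Real.exp_one_gt_d9]
    linarith
  -- split the ℤ-sum of ps into ℕ-sums
  set g : ℤ → ℝ := fun m => π * (m:ℝ)^2 * rexp (-π * b * (m:ℝ)^2) with hg
  have hgshift : ∀ n : ℕ, g ((n:ℤ)+1) = π * ((n:ℝ)+1)^2 * rexp (-π * b * ((n:ℝ)+1)^2) := by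
    intro n; simp only [hg]; push_cast; ring_nf
  have hsum1 : Summable fun n : ℕ => g n :=
    (summable_ps hbpos).comp_injective Nat.cast_injective
  have hgneg : ∀ n : ℕ, g (-((n:ℤ)+1)) = g ((n:ℤ)+1) := by
    intro n; simp only [hg]; push_cast; ring_nf
  have hsum2 : Summable fun n : ℕ => g (-((n:ℤ)+1)) := by
    refine ((summable_nat_add_iff 1).2 hsum1).congr fun n => ?_
    rw [hgneg n]; push_cast; ring_nf
  have hps_eq : ps b = 2 * ∑' n : ℕ, g ((n:ℤ)+1) := by
    have h0 : ps b = ∑' n : ℕ, g n + ∑' n : ℕ, g (-((n:ℤ)+1)) :=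
      tsum_of_nat_of_neg_add_one hsum1 hsum2
    have e2 : ∑' n : ℕ, g (-((n:ℤ)+1)) = ∑' n : ℕ, g ((n:ℤ)+1) := tsum_congr fun n => hgneg n
    have e1 : ∑' n : ℕ, g n = 0 + ∑' n : ℕ, g ((n:ℤ)+1) := by
      rw [Summable.tsum_eq_zero_add hsum1]
      have h00 : g (((0:ℕ):ℤ)) = 0 := by simp [hg]
      rw [h00]
      exact congrArg (0 + ·) (tsum_congr fun n =>
        congrArg g (by push_cast; ring))
    rw [h0, e1, e2]; ring
  -- termwise bound
  have hterm : ∀ n : ℕ, g ((n:ℤ)+1) ≤ (2/b) * r^(n+1) := by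
    intro n
    rw [hgshift n]
    set z : ℝ := (n:ℝ)+1 with hz
    have hz1 : (1:ℝ) ≤ z := by simp [hz]
    have hzpos : (0:ℝ) < z := by linarith
    have hsplit : rexp (-π * b * z^2) = rexp (-(π*b*z^2/2)) * rexp (-(π*b*z^2/2)) := by
      rw [← Real.exp_add]; ring_nf
    have h1 : π * z^2 * rexp (-(π*b*z^2/2)) ≤ 2/b := by
      have h := z_exp_le_one (show (0:ℝ) ≤ π*b*z^2/2 by positivity)
      rw [le_div_iff₀ hbpos]
      nlinarith [h, exp_nonneg (-(π*b*z^2/2))]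
    have h2 : rexp (-(π*b*z^2/2)) ≤ r^(n+1) := by
      have hzn : z^2 ≥ z := by nlinarith
      have e : r^(n+1) = rexp (-(π*b/2) * z) := by
        rw [hr, ← Real.exp_nat_mul]
        congr 1
        push_cast [hz]
        ring
      rw [e]
      apply exp_le_exp.2
      have hzn' : z ≤ z^2 := by nlinarith
      have := mul_le_mul_of_nonneg_left hzn' (show (0:ℝ) ≤ π*b/2 by positivity)
      linarith
    calc π * z^2 * rexp (-π * b * z^2)
        = (π * z^2 * rexp (-(π*b*z^2/2))) * rexp (-(π*b*z^2/2)) := by rw [hsplit]; ring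
      _ ≤ (2/b) * r^(n+1) := by
          apply mul_le_mul h1 h2 (exp_nonneg _) (by positivity)
  have hgeo : Summable fun n : ℕ => (2/b) * r^(n+1) := by
    apply Summable.mul_left
    exact (summable_nat_add_iff 1).2 (summable_geometric_of_lt_one hrpos.le (by linarith))
  have hshift_sum : Summable fun n : ℕ => g ((n:ℤ)+1) := by
    refine ((summable_nat_add_iff 1).2 hsum1).congr fun n => ?_
    rw [show ((n+1 : ℕ) : ℤ) = (n:ℤ)+1 by push_cast; ring]
  have hsum_le : ∑' n : ℕ, g ((n:ℤ)+1) ≤ ∑' n : ℕ, (2/b) * r^(n+1) :=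
    Summable.tsum_le_tsum hterm hshift_sum hgeo
  have hgeo_eq : ∑' n : ℕ, (2/b) * r^(n+1) ≤ (2/b) * (2*r) := by
    rw [tsum_mul_left]
    apply mul_le_mul_of_nonneg_left _ (by positivity)
    have hev : ∑' n : ℕ, r ^ (n+1) = (∑' n : ℕ, r ^ n) * r := by
      rw [← tsum_mul_right]
      exact tsum_congr fun n => (pow_succ r n)
    rw [hev, tsum_geometric_of_lt_one hrpos.le (by linarith)]
    have h1r : (1:ℝ)/2 ≤ 1 - r := by linarith
    have : (1-r)⁻¹ ≤ 2 := by
      rw [inv_le_comm₀ (by linarith) (by norm_num)]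
      linarith
    nlinarith
  have := hps_eq ▸ (by linarith [hsum_le, hgeo_eq] :
    2 * ∑' n : ℕ, g ((n:ℤ)+1) ≤ 2 * ((2/b) * (2*r)))
  calc ps b ≤ 2 * ((2/b) * (2*r)) := this
    _ = 8 * r / b := by field_simp; ring

lemma one_plus_sq : ∀ n : ℕ, (1:ℝ) ≤ ((n:ℝ)+1)^2 := by
  intro n
  have : (0:ℝ) ≤ (n:ℝ) := Nat.cast_nonneg n
  nlinarith

lemma Sf_nonneg {t : ℝ} (ht : 0 < t) : 0 ≤ Sf t := by
  rcases le_or_gt (1/4 : ℝ) t with h14 | h14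
  · refine tsum_nonneg fun n => ?_
    have h1 := one_plus_sq n
    have : (0:ℝ) ≤ 4 * ((n:ℝ)+1)^2 * t - 1 := by nlinarith
    exact mul_nonneg this (exp_nonneg _)
  · -- small t : use the theta transform
    have h := int_sum_eq ht
    rw [Sf_int ht] at h
    set b : ℝ := π/(2*t) with hb_def
    have hbpos : 0 < b := by positivity
    have hπ3 : (3:ℝ) ≤ π := pi_gt_three.le
    have hb2π : 2*π ≤ b := by
      rw [hb_def]
      have h1 : 2*t ≤ 1/2 := by linarith
      calc 2*π = π/(1/2) := by ring
        _ ≤ π/(2*t) := by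
            apply div_le_div_of_nonneg_left pi_pos.le (by positivity) h1
    have hb6 : (6:ℝ) ≤ b := by linarith
    have hb1 : (1:ℝ) ≤ b := by linarith
    -- rewrite the rpow factor
    have hc : (2*t/π) ^ (-(3:ℝ)/2) = b ^ ((3:ℝ)/2) := by
      have h1 : 2*t/π = b⁻¹ := by rw [hb_def]; field_simp
      rw [h1, Real.inv_rpow hbpos.le, show (-3:ℝ)/2 = -(3/2) by norm_num,
        Real.rpow_neg hbpos.le, inv_inv]
    have hc2 : b ^ ((3:ℝ)/2) ≤ b^2 := by
      calc b ^ ((3:ℝ)/2) ≤ b ^ (2:ℝ) :=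
            Real.rpow_le_rpow_of_exponent_le hb1 (by norm_num)
        _ = b^2 := by
            rw [show (2:ℝ) = ((2:ℕ):ℝ) by norm_num, Real.rpow_natCast]
    -- numeric bound : 16 * b * r ≤ 1 with r = exp (-(π*b/2))
    set x : ℝ := π*b/2 with hx_def
    have hxpos : 0 < x := by positivity
    set r : ℝ := rexp (-x) with hr
    have hrpos : 0 < r := exp_pos _
    have hfact : x^8/40320 ≤ rexp x := by
      have hsum := Real.sum_le_exp_of_nonneg hxpos.le 9
      have hmem : (8:ℕ) ∈ Finset.range 9 := by norm_num
      have hsingle := Finset.single_le_sum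
        (f := fun i => x^i / (Nat.factorial i)) (fun i _ => by positivity) hmem
      have h8 : ((Nat.factorial 8 : ℕ) : ℝ) = 40320 := by norm_num [Nat.factorial]
      calc x^8/40320 = x^8 / ((Nat.factorial 8 : ℕ):ℝ) := by rw [h8]
        _ ≤ ∑ i ∈ Finset.range 9, x^i / (Nat.factorial i) := hsingle
        _ ≤ rexp x := hsum
    have hrx : r * x^8 ≤ 40320 := by
      have h1 : r = (rexp x)⁻¹ := by rw [hr, exp_neg]
      have h2 : (rexp x)⁻¹ ≤ (x^8/40320)⁻¹ := by
        apply inv_anti₀ (by positivity) hfact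
      have h3 : (x^8/40320)⁻¹ * x^8 = 40320 := by
        field_simp
      calc r * x^8 ≤ (x^8/40320)⁻¹ * x^8 := by
            rw [h1]; exact mul_le_mul_of_nonneg_right h2 (by positivity)
        _ = 40320 := h3
    have hbr : 16 * b * r ≤ 1 := by
      have hb7 : (6:ℝ)^7 ≤ b^7 := pow_le_pow_left₀ (by norm_num) hb6 7
      have hπ8 : (3:ℝ)^8 ≤ π^8 := pow_le_pow_left₀ (by norm_num) hπ3 8
      have hbb : (279936:ℝ)*b ≤ b^8 := by
        have := mul_le_mul_of_nonneg_right hb7 hbpos.le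
        calc (279936:ℝ)*b = 6^7 * b := by norm_num
          _ ≤ b^7 * b := this
          _ = b^8 := by ring
      have hx8 : (645120:ℝ) * b ≤ x^8 := by
        have hxe : x^8 = π^8 * b^8 / 256 := by rw [hx_def]; ring
        have h1 : (3:ℝ)^8 * ((279936:ℝ)*b) ≤ π^8 * b^8 :=
          mul_le_mul hπ8 hbb (by positivity) (by positivity)
        rw [hxe]
        norm_num at h1 ⊢
        linarith
      have h1 : 16 * b * r * x^8 ≤ 645120 * b := by
        have := mul_le_mul_of_nonneg_left hrx (show (0:ℝ) ≤ 16*b by positivity)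
        calc 16 * b * r * x^8 = 16*b*(r*x^8) := by ring
          _ ≤ 16*b*40320 := this
          _ = 645120 * b := by ring
      have h2 : 16 * b * r * x^8 ≤ 1 * x^8 := by
        rw [one_mul]
        exact le_trans h1 hx8
      exact le_of_mul_le_mul_right h2 (by positivity)
    -- put it together
    have hps := ps_bound hb2π
    have hps_nonneg := ps_nonneg b
    have hr_eq : rexp (-(π*b/2)) = r := by rw [hr, hx_def]
    rw [hr_eq] at hps
    have hkey : 2 * (2*t/π) ^ (-(3:ℝ)/2) * ps b ≤ 1 := by
      rw [hc]
      have hbp : (0:ℝ) ≤ b ^ ((3:ℝ)/2) := Real.rpow_nonneg hbpos.le _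
      calc 2 * b ^ ((3:ℝ)/2) * ps b ≤ 2 * b^2 * (8*r/b) := by
            apply mul_le_mul (by nlinarith) hps hps_nonneg (by positivity)
        _ = 16 * b * r := by field_simp; ring
        _ ≤ 1 := hbr
    linarith

lemma Sf_tail {t : ℝ} (ht : 1 ≤ t) : Sf t ≤ 8 * rexp (-t) := by
  have ht0 : 0 < t := by linarith
  set r : ℝ := rexp (-t) with hr
  have hrpos : 0 < r := exp_pos _
  have hr1 : r ≤ 1/2 := by
    have h3 : r ≤ rexp (-1) := by rw [hr]; apply exp_le_exp.2; linarith
    have he : rexp (-1) < 1/2 := by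
      rw [exp_neg, inv_lt_comm₀ (exp_pos 1) (by norm_num)]
      calc (1/2 : ℝ)⁻¹ = 2 := by norm_num
        _ < rexp 1 := by linarith [Real.exp_one_gt_d9]
    linarith
  have hterm : ∀ n : ℕ, (4 * ((n:ℝ)+1)^2 * t - 1) * rexp (-(2 * ((n:ℝ)+1)^2 * t))
      ≤ 4 * r^(n+1) := by
    intro n
    set z : ℝ := (n:ℝ)+1 with hz
    have hz1 : (1:ℝ) ≤ z := by simp [hz]
    have hsplit : rexp (-(2 * z^2 * t)) = rexp (-(z^2*t)) * rexp (-(z^2*t)) := by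
      rw [← Real.exp_add]; ring_nf
    have h1 : z^2 * t * rexp (-(z^2*t)) ≤ 1 := z_exp_le_one (by positivity)
    have h2 : rexp (-(z^2*t)) ≤ r^(n+1) := by
      have e : r^(n+1) = rexp (-t * z) := by
        rw [hr, ← Real.exp_nat_mul]
        congr 1
        push_cast [hz]
        ring
      rw [e]
      apply exp_le_exp.2
      have hzz : z ≤ z^2 := by nlinarith
      nlinarith
    calc (4 * z^2 * t - 1) * rexp (-(2 * z^2 * t))
        ≤ 4 * z^2 * t * rexp (-(2 * z^2 * t)) := by
          have := exp_nonneg (-(2 * z^2 * t))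
          nlinarith
      _ = 4 * (z^2 * t * rexp (-(z^2*t))) * rexp (-(z^2*t)) := by rw [hsplit]; ring
      _ ≤ 4 * 1 * r^(n+1) := by
          apply mul_le_mul _ h2 (exp_nonneg _) (by norm_num)
          nlinarith
      _ = 4 * r^(n+1) := by ring
  have hgeo : Summable fun n : ℕ => 4 * r^(n+1) := by
    apply Summable.mul_left
    exact (summable_nat_add_iff 1).2 (summable_geometric_of_lt_one hrpos.le (by linarith))
  have hle : Sf t ≤ ∑' n : ℕ, 4 * r^(n+1) :=
    Summable.tsum_le_tsum hterm (summable_nat_shift ht0) hgeo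
  have : ∑' n : ℕ, 4 * r^(n+1) ≤ 8 * r := by
    rw [tsum_mul_left]
    have hev : ∑' n : ℕ, r ^ (n+1) = (∑' n : ℕ, r ^ n) * r := by
      rw [← tsum_mul_right]
      exact tsum_congr fun n => (pow_succ r n)
    rw [hev, tsum_geometric_of_lt_one hrpos.le (by linarith)]
    have : (1-r)⁻¹ ≤ 2 := by
      rw [inv_le_comm₀ (by linarith) (by norm_num)]
      linarith
    nlinarith
  linarith

lemma F3_nonneg {y : ℝ} (hy : 0 < y) : 0 ≤ F₃ y := by
  rw [F3_eq]
  have := Sf_le_half (show (0:ℝ) < y^2 by positivity)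
  linarith

lemma F3_le_one {y : ℝ} (hy : 0 < y) : F₃ y ≤ 1 := by
  rw [F3_eq]
  have := Sf_nonneg (show (0:ℝ) < y^2 by positivity)
  linarith

lemma F3_tail {y : ℝ} (hy : 0 < y) : 1 - F₃ y ≤ 16 / y^2 := by
  rw [F3_eq]
  set t : ℝ := y^2 with htd
  have ht0 : 0 < t := by positivity
  rcases le_or_gt t 1 with h1 | h1
  · have := Sf_le_half ht0
    have h16 : (1:ℝ) ≤ 16/t := by
      rw [le_div_iff₀ ht0]; linarith
    linarith
  · have htail := Sf_tail h1.le
    have hz : t * rexp (-t) ≤ 1 := z_exp_le_one (by linarith)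
    have : 16 * rexp (-t) ≤ 16 / t := by
      rw [le_div_iff₀ ht0]
      nlinarith [exp_nonneg (-t)]
    linarith

section Prod

variable {g : ℕ → ℝ} (h0 : ∀ j, 0 ≤ g j) (h1 : ∀ j, g j ≤ 1)

include h0 h1

lemma prod_antitone : Antitone (fun s : Finset ℕ => ∏ i ∈ s, g i) := by
  intro s t hst
  show ∏ i ∈ t, g i ≤ ∏ i ∈ s, g i
  rw [← Finset.prod_sdiff hst]
  have ha : ∏ i ∈ t \ s, g i ≤ 1 :=
    Finset.prod_le_one (fun i _ => h0 i) (fun i _ => h1 i)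
  have hb : 0 ≤ ∏ i ∈ s, g i := Finset.prod_nonneg fun i _ => h0 i
  exact mul_le_of_le_one_left hb ha

lemma bdd_below_prod : BddBelow (Set.range fun s : Finset ℕ => ∏ i ∈ s, g i) := by
  refine ⟨0, ?_⟩
  rintro y ⟨s, rfl⟩
  exact Finset.prod_nonneg fun i _ => h0 i

lemma hasProd_unit : HasProd g (⨅ s : Finset ℕ, ∏ i ∈ s, g i) :=
  tendsto_atTop_ciInf (prod_antitone h0 h1) (bdd_below_prod h0 h1)

lemma multipliable_unit : Multipliable g := ⟨_, hasProd_unit h0 h1⟩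

lemma tprod_nonneg_unit : 0 ≤ ∏' j, g j := by
  rw [(hasProd_unit h0 h1).tprod_eq]
  exact le_ciInf fun s => Finset.prod_nonneg fun i _ => h0 i

lemma tprod_le_prod_unit (J : ℕ) : (∏' j, g j) ≤ ∏ i ∈ Finset.range J, g i := by
  rw [(hasProd_unit h0 h1).tprod_eq]
  exact ciInf_le (bdd_below_prod h0 h1) (Finset.range J)

lemma prod_sub_prod_le (J : ℕ) : ∀ N, J ≤ N →
    (∏ i ∈ Finset.range J, g i) - (∏ i ∈ Finset.range N, g i) ≤
      ∑ j ∈ Finset.Ico J N, (1 - g j) := by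
  intro N
  induction N with
  | zero => intro hN; simp_all
  | succ N ih =>
      intro hN
      rcases Nat.lt_or_ge N J with hNJ | hNJ
      · have : J = N + 1 := by omega
        subst this
        simp
      · have hstep := ih hNJ
        rw [Finset.prod_range_succ, Finset.sum_Ico_succ_top hNJ]
        have hPN : ∏ i ∈ Finset.range N, g i ≤ 1 :=
          Finset.prod_le_one (fun i _ => h0 i) (fun i _ => h1 i)
        have hPN0 : 0 ≤ ∏ i ∈ Finset.range N, g i :=
          Finset.prod_nonneg fun i _ => h0 i
        have hgN := h0 N
        have hgN1 := h1 N
        nlinarith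

end Prod

lemma sum_pow_half_le (J : ℕ) : ∀ N, (∑ j ∈ Finset.Ico J N, ((1:ℝ)/2)^(j+1)) ≤ (1/2)^J := by
  have key : ∀ N, J ≤ N → (∑ j ∈ Finset.Ico J N, ((1:ℝ)/2)^(j+1)) ≤ (1/2)^J - (1/2)^N := by
    intro N
    induction N with
    | zero =>
        intro h
        have hJ0 : J = 0 := by omega
        subst hJ0
        simp
    | succ N ih =>
        intro h
        rcases Nat.lt_or_ge N J with hNJ | hNJ
        · have hJN : J = N+1 := by omega
          subst hJN
          simp
        · rw [Finset.sum_Ico_succ_top hNJ]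
          have h2 := ih hNJ
          have hp : ((1:ℝ)/2)^(N+1) = (1/2)^N * (1/2) := pow_succ _ _
          linarith
  intro N
  rcases Nat.lt_or_ge N J with h | h
  · rw [Finset.Ico_eq_empty_of_le (by omega)]
    simp only [Finset.sum_empty]
    positivity
  · have h1 := key N h
    have h2 : (0:ℝ) ≤ (1/2)^N := by positivity
    linarith

end SB

open SB

/-- Let `(U_j)_{j≥1}` be i.i.d. uniform on `[0,1]` and
`L_j = U_j ∏_{i<j}(1 − U_i)` the uniform stick-breaking process
(indexed here from `0`, so `L j` is the paper's `L_{j+1}`).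
Set `F(x) = E[∏_{j=1}^∞ F₃(x/√L_j)]` and `F_J(x) = E[∏_{j=1}^J F₃(x/√L_j)]`.
Let `x > 0` and `ε ∈ (0, 1/4)`.  If `J` is a positive integer with
`J ≥ J₀ := ⌊−ln(x²ε²/2)/ln 2⌋ + 1`, then `0 ≤ F_J(x) − F(x) < 2ε`. -/
theorem stmt_0 {Ω : Type*} [MeasurableSpace Ω] (μ : Measure Ω) [IsProbabilityMeasure μ]
    (U : ℕ → Ω → ℝ) (hUmeas : ∀ j, Measurable (U j))
    (hUindep : iIndepFun U μ)
    (hUunif : ∀ j, μ.map (U j) = volume.restrict (Set.Icc (0 : ℝ) 1))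
    (L : ℕ → Ω → ℝ)
    (hL : ∀ j ω, L j ω = U j ω * ∏ i ∈ Finset.range j, (1 - U i ω))
    (x : ℝ) (hx : 0 < x) (ε : ℝ) (hε : ε ∈ Set.Ioo (0 : ℝ) (1 / 4))
    (J : ℕ) (hJpos : 0 < J)
    (hJ : (⌊-Real.log (x ^ 2 * ε ^ 2 / 2) / Real.log 2⌋ + 1 : ℤ) ≤ (J : ℤ)) :
    0 ≤ (∫ ω, ∏ j ∈ Finset.range J, F₃ (x / Real.sqrt (L j ω)) ∂μ) -
        (∫ ω, ∏' j : ℕ, F₃ (x / Real.sqrt (L j ω)) ∂μ) ∧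
      (∫ ω, ∏ j ∈ Finset.range J, F₃ (x / Real.sqrt (L j ω)) ∂μ) -
        (∫ ω, ∏' j : ℕ, F₃ (x / Real.sqrt (L j ω)) ∂μ) < 2 * ε := by
  obtain ⟨hε0, hε14⟩ := hε
  -- measurability of L
  have hLmeas : ∀ j, Measurable (L j) := by
    intro j
    have hfe : L j = fun ω => U j ω * ∏ i ∈ Finset.range j, (1 - U i ω) := funext (hL j)
    rw [hfe]
    exact (hUmeas j).mul (Finset.measurable_prod _ fun i _ => measurable_const.sub (hUmeas i))
  -- a.e. the U's are in (0,1)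
  have hgoodU : ∀ᵐ ω ∂μ, ∀ j, U j ω ∈ Set.Ioo (0:ℝ) 1 := by
    rw [MeasureTheory.ae_all_iff]
    intro j
    have hmap : μ.map (U j) (Set.Ioo 0 1) = 1 := by
      rw [hUunif j, Measure.restrict_apply measurableSet_Ioo,
        Set.inter_eq_self_of_subset_left Set.Ioo_subset_Icc_self, Real.volume_Ioo]
      norm_num
    rw [Measure.map_apply (hUmeas j) measurableSet_Ioo] at hmap
    have hcompl : μ ((U j ⁻¹' (Set.Ioo 0 1))ᶜ) = 0 := by
      have h := measure_compl (s := U j ⁻¹' Set.Ioo (0:ℝ) 1) ((hUmeas j) measurableSet_Ioo)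
        (measure_ne_top μ _)
      rw [hmap, measure_univ] at h
      simpa using h
    exact hcompl
  -- a.e. the L's are in (0,1]
  have hgoodL : ∀ᵐ ω ∂μ, ∀ j, 0 < L j ω ∧ L j ω ≤ 1 := by
    filter_upwards [hgoodU] with ω hω
    intro j
    constructor
    · rw [hL]
      exact mul_pos (hω j).1 (Finset.prod_pos fun i _ => by linarith [(hω i).2])
    · rw [hL]
      have hprod : ∏ i ∈ Finset.range j, (1 - U i ω) ≤ 1 :=
        Finset.prod_le_one (fun i _ => by linarith [(hω i).2]) (fun i _ => by linarith [(hω i).1])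
      have hprod0 : 0 ≤ ∏ i ∈ Finset.range j, (1 - U i ω) :=
        Finset.prod_nonneg fun i _ => by linarith [(hω i).2]
      nlinarith [(hω j).1.le, (hω j).2]
  -- the factors
  set g : ℕ → Ω → ℝ := fun j ω => F₃ (x / Real.sqrt (L j ω)) with hg_def
  have hgfacts : ∀ᵐ ω ∂μ, ∀ j, (0 ≤ g j ω ∧ g j ω ≤ 1) ∧ 1 - g j ω ≤ 16 / x^2 * L j ω := by
    filter_upwards [hgoodL] with ω hω
    intro j
    obtain ⟨hL0, hL1⟩ := hω j
    have hsq : 0 < Real.sqrt (L j ω) := Real.sqrt_pos.2 hL0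
    have hy : 0 < x / Real.sqrt (L j ω) := div_pos hx hsq
    have hysq : (x / Real.sqrt (L j ω))^2 = x^2 / L j ω := by
      rw [div_pow, Real.sq_sqrt hL0.le]
    refine ⟨⟨F3_nonneg hy, F3_le_one hy⟩, ?_⟩
    have htail := F3_tail hy
    rw [hysq] at htail
    have he : 16 / (x^2 / L j ω) = 16 / x^2 * L j ω := by
      field_simp
    rw [he] at htail
    exact htail
  -- measurability of the factors
  have hymeas : ∀ j, Measurable (fun ω => x / Real.sqrt (L j ω)) :=
    fun j => measurable_const.div (Real.continuous_sqrt.measurable.comp (hLmeas j))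
  have hgmeas : ∀ j, AEMeasurable (g j) μ := by
    intro j
    set m : Ω → ℝ := fun ω => x / Real.sqrt (L j ω) with hm
    have hmm : Measurable m := hymeas j
    apply aemeasurable_of_tendsto_metrizable_ae (f := fun N ω =>
      1 - 2 * ∑ n ∈ Finset.range N,
        (4 * ((n:ℝ)+1)^2 * (m ω)^2 - 1) * rexp (-(2 * ((n:ℝ)+1)^2 * (m ω)^2))) Filter.atTop
    · intro N
      apply Measurable.aemeasurable
      apply Measurable.sub measurable_const
      apply Measurable.const_mul
      apply Finset.measurable_sum
      intro n _
      have h2 : Measurable fun ω => (m ω)^2 := hmm.pow_const 2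
      exact ((h2.const_mul _).sub measurable_const).mul
        (((h2.const_mul _).neg).exp)
    · filter_upwards [hgoodL] with ω hω
      obtain ⟨hL0, _⟩ := hω j
      have hy : 0 < m ω := div_pos hx (Real.sqrt_pos.2 hL0)
      have hsummable := summable_nat_shift (show (0:ℝ) < (m ω)^2 by positivity)
      have htend := hsummable.hasSum.tendsto_sum_nat
      have : Filter.Tendsto (fun N => 1 - 2 * ∑ n ∈ Finset.range N,
          (4 * ((n:ℝ)+1)^2 * (m ω)^2 - 1) * rexp (-(2 * ((n:ℝ)+1)^2 * (m ω)^2)))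
          Filter.atTop (𝓝 (1 - 2 * Sf ((m ω)^2))) :=
        (tendsto_const_nhds.sub (htend.const_mul 2))
      simpa [hg_def, F3_eq] using this
  -- partial products
  set P : ℕ → Ω → ℝ := fun N ω => ∏ j ∈ Finset.range N, g j ω with hP_def
  have hPmeas : ∀ N, AEMeasurable (P N) μ := by
    intro N
    exact Finset.aemeasurable_fun_prod _ fun j _ => hgmeas j
  have hPbound : ∀ N, ∀ᵐ ω ∂μ, ‖P N ω‖ ≤ 1 := by
    intro N
    filter_upwards [hgfacts] with ω hω
    rw [Real.norm_eq_abs, abs_of_nonneg (Finset.prod_nonneg fun j _ => (hω j).1.1)]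
    exact Finset.prod_le_one (fun j _ => (hω j).1.1) (fun j _ => (hω j).1.2)
  have hPint : ∀ N, Integrable (P N) μ := by
    intro N
    exact Integrable.mono' (integrable_const 1) (hPmeas N).aestronglyMeasurable (hPbound N)
  -- infinite product
  set Pinf : Ω → ℝ := fun ω => ∏' j, g j ω with hPinf_def
  have hPtend : ∀ᵐ ω ∂μ, Filter.Tendsto (fun N => P N ω) Filter.atTop (𝓝 (Pinf ω)) := by
    filter_upwards [hgfacts] with ω hω
    exact ((multipliable_unit (fun j => (hω j).1.1) (fun j => (hω j).1.2)).hasProd).tendsto_prod_nat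
  have hPinfmeas : AEMeasurable Pinf μ :=
    aemeasurable_of_tendsto_metrizable_ae Filter.atTop (fun N => hPmeas N) hPtend
  have hPinfle : ∀ᵐ ω ∂μ, ∀ N, 0 ≤ Pinf ω ∧ Pinf ω ≤ P N ω := by
    filter_upwards [hgfacts] with ω hω
    intro N
    exact ⟨tprod_nonneg_unit (fun j => (hω j).1.1) (fun j => (hω j).1.2),
      tprod_le_prod_unit (fun j => (hω j).1.1) (fun j => (hω j).1.2) N⟩
  have hPinfint : Integrable Pinf μ := by
    apply Integrable.mono' (integrable_const 1) hPinfmeas.aestronglyMeasurable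
    filter_upwards [hPinfle, hPbound 0] with ω hω h0
    rw [Real.norm_eq_abs, abs_of_nonneg (hω 0).1]
    calc Pinf ω ≤ P 0 ω := (hω 0).2
      _ ≤ 1 := by rw [Real.norm_eq_abs] at h0; exact (abs_le.1 h0).2
  -- identify the integrals in the statement
  have hEJ : (∫ ω, ∏ j ∈ Finset.range J, F₃ (x / Real.sqrt (L j ω)) ∂μ) = ∫ ω, P J ω ∂μ := rfl
  have hEinf : (∫ ω, ∏' j : ℕ, F₃ (x / Real.sqrt (L j ω)) ∂μ) = ∫ ω, Pinf ω ∂μ := rfl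
  rw [hEJ, hEinf]
  -- nonnegativity
  have hge : ∫ ω, Pinf ω ∂μ ≤ ∫ ω, P J ω ∂μ := by
    apply integral_mono_ae hPinfint (hPint J)
    filter_upwards [hPinfle] with ω hω
    exact (hω J).2
  constructor
  · linarith
  -- now the quantitative bound
  · -- integral of L j
    have hUbdd : ∀ i, ∀ᵐ ω ∂μ, U i ω ∈ Set.Icc (0:ℝ) 1 := by
      intro i
      filter_upwards [hgoodU] with ω hω
      exact ⟨(hω i).1.le, (hω i).2.le⟩
    have hUint : ∀ i, Integrable (U i) μ := by
      intro i
      apply Integrable.mono' (integrable_const 1) (hUmeas i).aestronglyMeasurable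
      filter_upwards [hUbdd i] with ω hω
      rw [Real.norm_eq_abs, abs_of_nonneg hω.1]
      exact hω.2
    have hEU : ∀ i, ∫ ω, U i ω ∂μ = 1/2 := by
      intro i
      have hmap := MeasureTheory.integral_map (μ := μ) (φ := U i) (hUmeas i).aemeasurable
        (f := fun y => y) aestronglyMeasurable_id
      rw [hUunif i] at hmap
      rw [← hmap]
      rw [MeasureTheory.integral_Icc_eq_integral_Ioc,
        ← intervalIntegral.integral_of_le (by norm_num : (0:ℝ) ≤ 1)]
      rw [integral_id]
      norm_num
    have hintL : ∀ j, ∫ ω, L j ω ∂μ = (1/2)^(j+1) := by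
      intro j
      set W : ℕ → Ω → ℝ := fun i ω => if i = j then U i ω else 1 - U i ω with hW_def
      have hWmeas : ∀ i, Measurable (W i) := by
        intro i
        rcases eq_or_ne i j with h | h
        · simpa [hW_def, h] using hUmeas j
        · simp only [hW_def, if_neg h]; exact (measurable_const_sub (1:ℝ)).comp (hUmeas i)
      have hWindep : iIndepFun W μ := by
        have hcomp := hUindep.comp (fun i => if i = j then (fun r : ℝ => r) else (fun r : ℝ => 1 - r))
          (fun i => by
            rcases eq_or_ne i j with h | h
            · simpa [h] using measurable_id'
            · simpa [h] using measurable_const_sub (1:ℝ))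
        have hWe : W = fun i => (if i = j then (fun r:ℝ => r) else (fun r:ℝ => 1 - r)) ∘ U i := by
          funext i ω
          rcases eq_or_ne i j with h | h <;> simp [hW_def, h]
        rw [hWe]
        exact hcomp
      have hWbdd : ∀ i, ∀ᵐ ω ∂μ, W i ω ∈ Set.Icc (0:ℝ) 1 := by
        intro i
        filter_upwards [hgoodU] with ω hω
        rcases eq_or_ne i j with h | h
        · simp only [hW_def, h, if_pos rfl]
          exact ⟨(hω j).1.le, (hω j).2.le⟩
        · simp only [hW_def, h, if_neg h]
          constructor
          · linarith [(hω i).2]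
          · linarith [(hω i).1]
      have hWint : ∀ i, Integrable (W i) μ := by
        intro i
        apply Integrable.mono' (integrable_const 1) (hWmeas i).aestronglyMeasurable
        filter_upwards [hWbdd i] with ω hω
        rw [Real.norm_eq_abs, abs_of_nonneg hω.1]
        exact hω.2
      have hEW : ∀ i, ∫ ω, W i ω ∂μ = 1/2 := by
        intro i
        rcases eq_or_ne i j with h | h
        · have : W i = U i := by funext ω; simp [hW_def, h]
          rw [this, hEU i]
        · have : W i = fun ω => 1 - U i ω := by funext ω; simp [hW_def, h]
          rw [this]
          rw [integral_sub (integrable_const 1) (hUint i), hEU i]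
          simp
          norm_num
      have hprodint : ∀ k, Integrable (fun ω => ∏ i ∈ Finset.range k, W i ω) μ := by
        intro k
        apply Integrable.mono' (integrable_const 1)
        · exact (Finset.aemeasurable_fun_prod _ fun i _ => (hWmeas i).aemeasurable).aestronglyMeasurable
        · have : ∀ᵐ ω ∂μ, ∀ i, W i ω ∈ Set.Icc (0:ℝ) 1 := by
            filter_upwards [hgoodU] with ω hω
            intro i
            rcases eq_or_ne i j with h | h
            · simp only [hW_def, h, if_pos rfl]
              exact ⟨(hω j).1.le, (hω j).2.le⟩
            · simp only [hW_def, if_neg h]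
              exact ⟨by linarith [(hω i).2], by linarith [(hω i).1]⟩
          filter_upwards [this] with ω hω
          rw [Real.norm_eq_abs, abs_of_nonneg (Finset.prod_nonneg fun i _ => (hω i).1)]
          exact Finset.prod_le_one (fun i _ => (hω i).1) (fun i _ => (hω i).2)
      have happly : ∀ (s : Finset ℕ) (ω : Ω), (∏ i ∈ s, W i) ω = ∏ i ∈ s, W i ω := by
        intro s ω
        simp
      have hprodint' : ∀ (s : Finset ℕ), Integrable (∏ i ∈ s, W i) μ := by
        intro s
        apply Integrable.mono' (integrable_const 1)
        · exact (Measurable.aestronglyMeasurable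
            (Finset.measurable_prod s (fun i _ => hWmeas i))).congr
            (Filter.Eventually.of_forall fun ω => (happly s ω).symm)
        · have : ∀ᵐ ω ∂μ, ∀ i, W i ω ∈ Set.Icc (0:ℝ) 1 := by
            filter_upwards [hgoodU] with ω hω
            intro i
            rcases eq_or_ne i j with h | h
            · simp only [hW_def, h, if_pos rfl]
              exact ⟨(hω j).1.le, (hω j).2.le⟩
            · simp only [hW_def, if_neg h]
              exact ⟨by linarith [(hω i).2], by linarith [(hω i).1]⟩
          filter_upwards [this] with ω hω
          rw [happly s ω]
          rw [Real.norm_eq_abs, abs_of_nonneg (Finset.prod_nonneg fun i _ => (hω i).1)]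
          exact Finset.prod_le_one (fun i _ => (hω i).1) (fun i _ => (hω i).2)
      have hprodE : ∀ k, ∫ ω, ∏ i ∈ Finset.range k, W i ω ∂μ = (1/2)^k := by
        intro k
        induction k with
        | zero => simp
        | succ k ih =>
            have hind := (hWindep.indepFun_prod_range_succ hWmeas k).integral_mul_eq_mul_integral
              (hprodint' (Finset.range k)).aestronglyMeasurable (hWint k).aestronglyMeasurable
            have e1 : ∫ ω, ∏ i ∈ Finset.range (k+1), W i ω ∂μ
                = ∫ ω, ((∏ i ∈ Finset.range k, W i) * W k) ω ∂μ := by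
              apply integral_congr_ae
              apply Filter.Eventually.of_forall
              intro ω
              show (∏ i ∈ Finset.range (k+1), W i ω) = ((∏ i ∈ Finset.range k, W i) * W k) ω
              rw [Finset.prod_range_succ, Pi.mul_apply, happly]
            have e2 : ∫ ω, (∏ i ∈ Finset.range k, W i) ω ∂μ
                = ∫ ω, ∏ i ∈ Finset.range k, W i ω ∂μ := by
              apply integral_congr_ae
              exact Filter.Eventually.of_forall fun ω => happly _ ω
            rw [e1]
            calc ∫ ω, ((∏ i ∈ Finset.range k, W i) * W k) ω ∂μ
                = (∫ ω, (∏ i ∈ Finset.range k, W i) ω ∂μ) * ∫ ω, W k ω ∂μ := hind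
              _ = (1/2)^k * (1/2) := by rw [e2, ih, hEW k]
              _ = (1/2)^(k+1) := by ring
      -- decompose L j
      have hLW : ∀ ω, L j ω = ((∏ i ∈ Finset.range j, W i) * W j) ω := by
        intro ω
        rw [hL, Pi.mul_apply, happly]
        have h1 : ∏ i ∈ Finset.range j, W i ω = ∏ i ∈ Finset.range j, (1 - U i ω) := by
          apply Finset.prod_congr rfl
          intro i hi
          have : i ≠ j := by
            have := Finset.mem_range.1 hi
            omega
          simp [hW_def, this]
        have h2 : W j ω = U j ω := by simp [hW_def]
        rw [h1, h2]
        ring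
      have hsep := (hWindep.indepFun_finsetProd_of_notMem hWmeas
        (Finset.notMem_range_self (n := j))).integral_mul_eq_mul_integral
        (hprodint' (Finset.range j)).aestronglyMeasurable (hWint j).aestronglyMeasurable
      calc ∫ ω, L j ω ∂μ = ∫ ω, ((∏ i ∈ Finset.range j, W i) * W j) ω ∂μ :=
            integral_congr_ae (Filter.Eventually.of_forall hLW)
        _ = (∫ ω, (∏ i ∈ Finset.range j, W i) ω ∂μ) * ∫ ω, W j ω ∂μ := hsep
        _ = (∫ ω, ∏ i ∈ Finset.range j, W i ω ∂μ) * ∫ ω, W j ω ∂μ := by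
            congr 1
            exact integral_congr_ae (Filter.Eventually.of_forall fun ω => happly _ ω)
        _ = (1/2)^j * (1/2) := by rw [hprodE j, hEW j]
        _ = (1/2)^(j+1) := by ring
    -- integrability of L j
    have hLint : ∀ j, Integrable (L j) μ := by
      intro j
      apply Integrable.mono' (integrable_const 1) (hLmeas j).aestronglyMeasurable
      filter_upwards [hgoodL] with ω hω
      rw [Real.norm_eq_abs, abs_of_nonneg (hω j).1.le]
      exact (hω j).2
    have hgint : ∀ j, Integrable (g j) μ := by
      intro j
      apply Integrable.mono' (integrable_const 1) (hgmeas j).aestronglyMeasurable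
      filter_upwards [hgfacts] with ω hω
      rw [Real.norm_eq_abs, abs_of_nonneg (hω j).1.1]
      exact (hω j).1.2
    have hEdiff : ∀ j, ∫ ω, (1 - g j ω) ∂μ ≤ 16 / x^2 * (1/2)^(j+1) := by
      intro j
      have h1 : ∫ ω, (1 - g j ω) ∂μ ≤ ∫ ω, 16 / x^2 * L j ω ∂μ := by
        apply integral_mono_ae ((integrable_const 1).sub (hgint j)) ((hLint j).const_mul _)
        filter_upwards [hgfacts] with ω hω
        exact (hω j).2
      rw [integral_const_mul, hintL j] at h1
      exact h1
    have hkey : ∀ N, J ≤ N → (∫ ω, P J ω ∂μ) - (∫ ω, P N ω ∂μ) ≤ 16 / x^2 * (1/2)^J := by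
      intro N hN
      rw [← integral_sub (hPint J) (hPint N)]
      have h2 : ∫ ω, (P J ω - P N ω) ∂μ ≤ ∫ ω, (∑ j ∈ Finset.Ico J N, (1 - g j ω)) ∂μ := by
        apply integral_mono_ae ((hPint J).sub (hPint N))
        · exact integrable_finset_sum _ fun j _ => (integrable_const 1).sub (hgint j)
        filter_upwards [hgfacts] with ω hω
        exact prod_sub_prod_le (fun j => (hω j).1.1) (fun j => (hω j).1.2) J N hN
      have h2' : ∫ ω, (∑ j ∈ Finset.Ico J N, (1 - g j ω)) ∂μ
          = ∑ j ∈ Finset.Ico J N, ∫ ω, (1 - g j ω) ∂μ :=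
        integral_finset_sum _ (fun j _ => (integrable_const 1).sub (hgint j))
      rw [h2'] at h2
      have h3 : ∑ j ∈ Finset.Ico J N, ∫ ω, (1 - g j ω) ∂μ ≤
          ∑ j ∈ Finset.Ico J N, 16 / x^2 * (1/2)^(j+1) :=
        Finset.sum_le_sum fun j _ => hEdiff j
      have h4 : ∑ j ∈ Finset.Ico J N, 16 / x^2 * (1/2)^(j+1) ≤ 16 / x^2 * (1/2)^J := by
        rw [← Finset.mul_sum]
        apply mul_le_mul_of_nonneg_left (sum_pow_half_le J N) (by positivity)
      linarith
    -- limit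
    have htendI : Filter.Tendsto (fun N => ∫ ω, P N ω ∂μ) Filter.atTop (𝓝 (∫ ω, Pinf ω ∂μ)) := by
      apply MeasureTheory.tendsto_integral_of_dominated_convergence (fun _ => (1:ℝ))
        (fun N => (hPmeas N).aestronglyMeasurable) (integrable_const 1) hPbound hPtend
    have hlim : (∫ ω, P J ω ∂μ) - (∫ ω, Pinf ω ∂μ) ≤ 16 / x^2 * (1/2)^J := by
      have := (tendsto_const_nhds (x := ∫ ω, P J ω ∂μ)).sub htendI
      apply le_of_tendsto this
      filter_upwards [Filter.eventually_ge_atTop J] with N hN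
      exact hkey N hN
    -- numeric conclusion
    have hnum : 16 / x^2 * ((1:ℝ)/2)^J < 2 * ε := by
      set d : ℝ := x^2 * ε^2 / 2 with hd_def
      have hd0 : 0 < d := by positivity
      have hlog2 : 0 < Real.log 2 := Real.log_pos one_lt_two
      have hceil : -Real.log d / Real.log 2 < (J : ℝ) := by
        have h1 : (⌊-Real.log d / Real.log 2⌋ : ℝ) + 1 ≤ (J : ℝ) := by
          exact_mod_cast hJ
        have h2 := Int.lt_floor_add_one (-Real.log d / Real.log 2)
        linarith
      have hJlog : -Real.log d < (J : ℝ) * Real.log 2 := by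
        rw [div_lt_iff₀ hlog2] at hceil
        linarith
      have hpowlt : ((1:ℝ)/2)^J < d := by
        have hlhs : Real.log (((1:ℝ)/2)^J) = -((J:ℝ) * Real.log 2) := by
          rw [Real.log_pow]
          rw [show ((1:ℝ)/2) = 2⁻¹ by norm_num, Real.log_inv]
          push_cast
          ring
        have hloglt : Real.log (((1:ℝ)/2)^J) < Real.log d := by
          rw [hlhs]; linarith
        have hexp := Real.exp_lt_exp.2 hloglt
        rwa [Real.exp_log (by positivity : (0:ℝ) < ((1:ℝ)/2)^J), Real.exp_log hd0] at hexp
      have h1 : 16 / x^2 * ((1:ℝ)/2)^J < 16 / x^2 * d :=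
        mul_lt_mul_of_pos_left hpowlt (by positivity)
      have h2 : 16 / x^2 * d = 8 * ε^2 := by
        rw [hd_def]
        field_simp
        ring
      nlinarith
    linarith
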